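/- Let p ∈ [1/2, 1), let K be a p-core CRG all of whose vertices are white and all of whose edges are black or gray, and let x be a nonnegative weight vector summing to 1 attaining the minimum g_K(p). Let v_0 be a vertex of maximum weight under x, suppose v_0 has at least one gray neighbor, and let v_1 be a gray neighbor of v_0 of maximum weight among the gray neighbors of v_0. Then at least one of the following holds: (i) v_0 and v_1 have at least two common gray neighbors; (ii) g_K(p) > (1−p)/2; (iii) g_K(p) ≥ p/3. -/
import Mathlib


/-- Colors for edges of a colored regularity graph. -/
inductive EColor : Type
  | white
  | gray
  | black
deriving DecidableEq

/-- A colored regularity graph (CRG) on a finite vertex type `V`: each vertex is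
white or black (`vWhite v = true` means white), and each pair of distinct vertices
gets a symmetric edge color (white, gray or black). -/
structure CRG (V : Type) [Fintype V] where
  vWhite : V → Bool
  ecolor : V → V → EColor
  ecolor_symm : ∀ u v, ecolor u v = ecolor v u

namespace CRG

variable {V : Type} [Fintype V] [DecidableEq V]

/-- The matrix `M_K(p)`. -/
noncomputable def M (K : CRG V) (p : ℝ) (u v : V) : ℝ :=
  if u = v then (if K.vWhite u then p else 1 - p)
  else
    match K.ecolor u v with
    | EColor.white => p
    | EColor.black => 1 - p
    | EColor.gray => 0

/-- The function `g_K(p)`: the minimum of `xᵀ M_K(p) x` over nonnegative weight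
vectors summing to `1`. -/
noncomputable def g (K : CRG V) (p : ℝ) : ℝ :=
  sInf {r : ℝ | ∃ x : V → ℝ, (∀ v, 0 ≤ x v) ∧ (∑ v, x v) = 1 ∧
    r = ∑ u, ∑ v, x u * K.M p u v * x v}

/-- The sub-CRG induced on a subset `s` of the vertices. -/
def sub (K : CRG V) (s : Finset V) : CRG {v // v ∈ s} where
  vWhite := fun v => K.vWhite v.1
  ecolor := fun u v => K.ecolor u.1 v.1
  ecolor_symm := fun u v => K.ecolor_symm u.1 v.1

/-- `K` is `p`-core if `g_K(p) < g_{K'}(p)` for every proper (nonempty) sub-CRG `K'`. -/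
def IsPCore (K : CRG V) (p : ℝ) : Prop :=
  ∀ s : Finset V, s.Nonempty → s ≠ Finset.univ → K.g p < (K.sub s).g p

/-- `x` is an optimal weight vector for `K` at `p`. -/
def IsOptWeight (K : CRG V) (p : ℝ) (x : V → ℝ) : Prop :=
  (∀ v, 0 ≤ x v) ∧ (∑ v, x v) = 1 ∧
    (∑ u, ∑ v, x u * K.M p u v * x v) = K.g p

/-- The gray degree `d_G(v)`: total weight of gray neighbors of `v`. -/
noncomputable def dG (K : CRG V) (x : V → ℝ) (v : V) : ℝ :=
  ∑ w ∈ Finset.univ.filter fun w => w ≠ v ∧ K.ecolor v w = EColor.gray, x w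

/-- The white degree `d_W(v)`: total weight of white neighbors of `v`, including `v`
itself if `v` is white. -/
noncomputable def dW (K : CRG V) (x : V → ℝ) (v : V) : ℝ :=
  (∑ w ∈ Finset.univ.filter fun w => w ≠ v ∧ K.ecolor v w = EColor.white, x w) +
    (if K.vWhite v then x v else 0)

/-- The black degree `d_B(v)`: total weight of black neighbors of `v`, including `v`
itself if `v` is black. -/
noncomputable def dB (K : CRG V) (x : V → ℝ) (v : V) : ℝ :=
  (∑ w ∈ Finset.univ.filter fun w => w ≠ v ∧ K.ecolor v w = EColor.black, x w) +
    (if K.vWhite v then 0 else x v)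

/-- The number of gray neighbors of `v`. -/
def grayDeg (K : CRG V) (v : V) : ℕ :=
  (Finset.univ.filter fun w => w ≠ v ∧ K.ecolor v w = EColor.gray).card

end CRG

/-- A graph `H` embeds in a CRG `K`, written `H ↦ K`. -/
def EmbedsIn {α : Type*} {V : Type} [Fintype V] (H : SimpleGraph α) (K : CRG V) : Prop :=
  ∃ φ : α → V,
    (∀ a b : α, H.Adj a b →
      (φ a = φ b ∧ K.vWhite (φ a) = false) ∨
      (φ a ≠ φ b ∧ (K.ecolor (φ a) (φ b) = EColor.black ∨ K.ecolor (φ a) (φ b) = EColor.gray))) ∧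
    (∀ a b : α, a ≠ b → ¬H.Adj a b →
      (φ a = φ b ∧ K.vWhite (φ a) = true) ∨
      (φ a ≠ φ b ∧ (K.ecolor (φ a) (φ b) = EColor.white ∨ K.ecolor (φ a) (φ b) = EColor.gray)))

namespace CRGaux

variable {V : Type} [Fintype V] [DecidableEq V]

lemma M_symm (K : CRG V) (p : ℝ) (u v : V) : K.M p u v = K.M p v u := by
  unfold CRG.M
  rcases eq_or_ne u v with h | h
  · subst h; simp
  · rw [if_neg h, if_neg (Ne.symm h), K.ecolor_symm]

lemma M_nonneg (K : CRG V) {p : ℝ} (hp0 : 0 ≤ p) (hp1 : p ≤ 1) (u v : V) :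
    0 ≤ K.M p u v := by
  unfold CRG.M
  split_ifs <;> try linarith
  rcases h : K.ecolor u v <;> simp [h] <;> linarith

lemma g_bddBelow (K : CRG V) {p : ℝ} (hp0 : 0 ≤ p) (hp1 : p ≤ 1) :
    BddBelow {r : ℝ | ∃ x : V → ℝ, (∀ v, 0 ≤ x v) ∧ (∑ v, x v) = 1 ∧
      r = ∑ u, ∑ v, x u * K.M p u v * x v} := by
  refine ⟨0, fun r hr => ?_⟩
  obtain ⟨x, hx0, _, rfl⟩ := hr
  refine Finset.sum_nonneg fun u _ => Finset.sum_nonneg fun v _ => ?_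
  exact mul_nonneg (mul_nonneg (hx0 u) (M_nonneg K hp0 hp1 u v)) (hx0 v)

lemma g_le (K : CRG V) {p : ℝ} (hp0 : 0 ≤ p) (hp1 : p ≤ 1) (y : V → ℝ)
    (hy0 : ∀ v, 0 ≤ y v) (hy1 : (∑ v, y v) = 1) :
    K.g p ≤ ∑ u, ∑ v, y u * K.M p u v * y v :=
  csInf_le (g_bddBelow K hp0 hp1) ⟨y, hy0, hy1, rfl⟩


lemma sub_M (K : CRG V) (p : ℝ) (s : Finset V) (u v : {v // v ∈ s}) :
    (K.sub s).M p u v = K.M p u.1 v.1 := by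
  unfold CRG.M CRG.sub
  rcases eq_or_ne u v with h | h
  · subst h; simp
  · rw [if_neg h, if_neg (fun hh => h (Subtype.ext hh))]

lemma pos_of_core (K : CRG V) {p : ℝ} (hp0 : 0 ≤ p) (hp1 : p ≤ 1)
    (hcore : K.IsPCore p) {x : V → ℝ} (hx : K.IsOptWeight p x) (v : V) : 0 < x v := by
  classical
  obtain ⟨hx0, hx1, hxg⟩ := hx
  rcases (hx0 v).lt_or_eq with h | h
  · exact h
  exfalso
  set s : Finset V := Finset.univ.filter (fun w => x w ≠ 0) with hs
  have hmem : ∀ w, w ∈ s ↔ x w ≠ 0 := by intro w; simp [hs]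
  have hvs : v ∉ s := by simp [hmem, ← h]
  have hsne : s.Nonempty := by
    by_contra hne
    rw [Finset.not_nonempty_iff_eq_empty] at hne
    have : (∑ w, x w) = 0 := by
      refine Finset.sum_eq_zero fun w _ => ?_
      by_contra hw
      have : w ∈ s := (hmem w).2 hw
      simp [hne] at this
    rw [hx1] at this; norm_num at this
  have hsu : s ≠ Finset.univ := fun hh => hvs (hh ▸ Finset.mem_univ v)
  have hcl := hcore s hsne hsu
  -- the restriction of x is feasible for the sub-CRG with the same value
  have hzero : ∀ w, w ∉ s → x w = 0 := by
    intro w hw; by_contra hh; exact hw ((hmem w).2 hh)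
  have hsum : (∑ w : {w // w ∈ s}, x w.1) = 1 := by
    rw [Finset.sum_coe_sort s (fun w => x w)]
    rw [← hx1]
    exact Finset.sum_subset (Finset.subset_univ s) (fun w _ hw => hzero w hw)
  have hval : (∑ u : {w // w ∈ s}, ∑ v : {w // w ∈ s},
      x u.1 * (K.sub s).M p u v * x v.1) = K.g p := by
    rw [← hxg]
    have : ∀ u : {w // w ∈ s}, (∑ v : {w // w ∈ s}, x u.1 * (K.sub s).M p u v * x v.1)
        = ∑ w ∈ s, x u.1 * K.M p u.1 w * x w := by
      intro u
      rw [← Finset.sum_coe_sort s (fun w => x u.1 * K.M p u.1 w * x w)]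
      exact Finset.sum_congr rfl fun w _ => by rw [sub_M]
    rw [Finset.sum_congr rfl (fun u _ => this u),
      Finset.sum_coe_sort s (fun w => ∑ w' ∈ s, x w * K.M p w w' * x w')]
    have h1 : ∀ w ∈ Finset.univ (α := V), (∑ w' ∈ s, x w * K.M p w w' * x w')
        = ∑ w', x w * K.M p w w' * x w' := by
      intro w _
      exact Finset.sum_subset (Finset.subset_univ s)
        (fun w' _ hw' => by rw [hzero w' hw']; ring)
    rw [Finset.sum_subset (Finset.subset_univ s) (fun w _ hw => by
      rw [Finset.sum_eq_zero]; intro w' _; rw [hzero w hw]; ring)]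
    exact Finset.sum_congr rfl h1
  have : (K.sub s).g p ≤ K.g p := hval ▸ g_le (K.sub s) hp0 hp1 _ (fun w => hx0 w.1) hsum
  linarith


noncomputable def row (K : CRG V) (p : ℝ) (x : V → ℝ) (v : V) : ℝ :=
  ∑ u, K.M p v u * x u

lemma quad_pert (K : CRG V) (p : ℝ) (x : V → ℝ) (v : V) (ε : ℝ) :
    (∑ u, ∑ w, (fun t => (1 - ε) * x t + ε * (if t = v then 1 else 0)) u * K.M p u w *
      (fun t => (1 - ε) * x t + ε * (if t = v then 1 else 0)) w)
    = (1 - ε) ^ 2 * (∑ u, ∑ w, x u * K.M p u w * x w)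
      + 2 * ε * (1 - ε) * row K p x v + ε ^ 2 * K.M p v v := by
  have expand : ∀ u w : V,
      (fun t => (1 - ε) * x t + ε * (if t = v then 1 else 0)) u * K.M p u w *
      (fun t => (1 - ε) * x t + ε * (if t = v then 1 else 0)) w
      = (1 - ε) ^ 2 * (x u * K.M p u w * x w)
        + ε * (1 - ε) * (if u = v then K.M p v w * x w else 0)
        + ε * (1 - ε) * (if w = v then x u * K.M p u v else 0)
        + ε ^ 2 * (if u = v then if w = v then K.M p v v else 0 else 0) := by
    intro u w
    by_cases hu : u = v <;> by_cases hw : w = v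
    · subst hu; subst hw; simp; ring
    · subst hu; simp [hw]; ring
    · subst hw; simp [hu]; ring
    · simp [hu, hw]; ring
  rw [Finset.sum_congr rfl fun u _ => Finset.sum_congr rfl fun w _ => expand u w]
  simp only [Finset.sum_add_distrib, ← Finset.mul_sum, Finset.sum_ite_eq',
    Finset.mem_univ, if_true]
  have e1 : (∑ i : V, ∑ j : V, if i = v then K.M p v j * x j else 0) = row K p x v := by
    have e : ∀ i : V, (∑ j : V, if i = v then K.M p v j * x j else 0)
        = if i = v then row K p x v else 0 := by
      intro i
      by_cases h : i = v
      · simp [h, row]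
      · simp [h]
    rw [Finset.sum_congr rfl fun i _ => e i, Finset.sum_ite_eq' Finset.univ v]
    simp
  have e2 : (∑ i : V, x i * K.M p i v) = row K p x v := by
    unfold row
    exact Finset.sum_congr rfl fun i _ => by rw [M_symm]; ring
  have e3 : (∑ i : V, ∑ j : V, if i = v then if j = v then K.M p v v else 0 else 0)
      = K.M p v v := by
    have e : ∀ i : V, (∑ j : V, if i = v then if j = v then K.M p v v else 0 else 0)
        = if i = v then K.M p v v else 0 := by
      intro i
      by_cases h : i = v
      · simp [h]
      · simp [h]
    rw [Finset.sum_congr rfl fun i _ => e i, Finset.sum_ite_eq' Finset.univ v]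
    simp
  rw [e1, e2, e3]; ring


lemma row_ge (K : CRG V) {p : ℝ} (hp0 : 0 ≤ p) (hp1 : p ≤ 1) {x : V → ℝ}
    (hx : K.IsOptWeight p x) (v : V) : K.g p ≤ row K p x v := by
  obtain ⟨hx0, hx1, hxg⟩ := hx
  by_contra hlt
  push_neg at hlt
  set r := row K p x v with hr
  set m := K.M p v v with hm
  set c := K.g p - r with hc
  have hcpos : 0 < c := by simp [hc]; linarith
  set ε := min 1 (c / (|K.g p - 2 * r + m| + 1)) with hε
  have habs : 0 ≤ |K.g p - 2 * r + m| := abs_nonneg _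
  have hεpos : 0 < ε := lt_min one_pos (div_pos hcpos (by linarith))
  have hε1 : ε ≤ 1 := min_le_left _ _
  have key : |K.g p - 2 * r + m| * ε ≤ c := by
    calc |K.g p - 2 * r + m| * ε ≤ |K.g p - 2 * r + m| * (c / (|K.g p - 2 * r + m| + 1)) :=
          mul_le_mul_of_nonneg_left (min_le_right _ _) habs
      _ ≤ (|K.g p - 2 * r + m| + 1) * (c / (|K.g p - 2 * r + m| + 1)) := by
          apply mul_le_mul_of_nonneg_right (by linarith)
          positivity
      _ = c := by field_simp
  set y : V → ℝ := fun t => (1 - ε) * x t + ε * (if t = v then 1 else 0) with hy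
  have hy0 : ∀ w, 0 ≤ y w := by
    intro w
    have := hx0 w
    simp only [hy]
    have : 0 ≤ (1 - ε) * x w := mul_nonneg (by linarith) (hx0 w)
    split_ifs <;> nlinarith
  have hy1 : (∑ w, y w) = 1 := by
    simp only [hy, Finset.sum_add_distrib, ← Finset.mul_sum, hx1,
      Finset.sum_ite_eq', Finset.mem_univ, if_true]
    ring
  have hle := g_le K hp0 hp1 y hy0 hy1
  rw [hy, quad_pert K p x v ε, hxg] at hle
  -- hle : g ≤ (1-ε)^2 g + 2 ε (1-ε) r + ε^2 m
  have expand : (1 - ε) ^ 2 * K.g p + 2 * ε * (1 - ε) * r + ε ^ 2 * m - K.g p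
      = ε * (2 * (r - K.g p) + ε * (K.g p - 2 * r + m)) := by ring
  have h2 : ε * (K.g p - 2 * r + m) ≤ c := le_trans (le_trans (le_abs_self _)
    (by rw [abs_mul, abs_of_pos hεpos]; nlinarith [abs_nonneg (K.g p - 2*r + m)])) key
  nlinarith [hεpos, h2]

lemma row_eq (K : CRG V) {p : ℝ} (hp0 : 0 ≤ p) (hp1 : p ≤ 1) {x : V → ℝ}
    (hx : K.IsOptWeight p x) (v : V) (hv : 0 < x v) : row K p x v = K.g p := by
  obtain ⟨hx0, hx1, hxg⟩ := hx
  have hsum : (∑ w, x w * (row K p x w - K.g p)) = 0 := by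
    have h1 : (∑ w, x w * row K p x w) = K.g p := by
      rw [← hxg]
      unfold row
      rw [Finset.sum_comm (s := Finset.univ) (t := Finset.univ)
        (f := fun u w => x u * K.M p u w * x w)]
      refine Finset.sum_congr rfl fun w _ => ?_
      rw [Finset.mul_sum]
      refine Finset.sum_congr rfl fun u _ => ?_
      rw [M_symm]; ring
    simp only [mul_sub, Finset.sum_sub_distrib, h1, ← Finset.sum_mul, hx1]
    ring
  have hterm : ∀ w ∈ Finset.univ, 0 ≤ x w * (row K p x w - K.g p) := fun w _ =>
    mul_nonneg (hx0 w) (by linarith [row_ge K hp0 hp1 ⟨hx0, hx1, hxg⟩ w])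
  have := (Finset.sum_eq_zero_iff_of_nonneg hterm).1 hsum v (Finset.mem_univ v)
  have : row K p x v - K.g p = 0 := by
    rcases mul_eq_zero.1 this with h | h
    · exact absurd h (ne_of_gt hv)
    · exact h
  linarith


lemma M_gray (K : CRG V) (p : ℝ) {u v : V} (h : u ≠ v) (hc : K.ecolor u v = EColor.gray) :
    K.M p u v = 0 := by simp [CRG.M, h, hc]

lemma M_black (K : CRG V) (p : ℝ) {u v : V} (h : u ≠ v) (hc : K.ecolor u v = EColor.black) :
    K.M p u v = 1 - p := by simp [CRG.M, h, hc]

lemma eigen (K : CRG V) (p : ℝ) (hwhite : ∀ v : V, K.vWhite v = true)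
    (hedges : ∀ u v : V, u ≠ v → K.ecolor u v ≠ EColor.white)
    (x : V → ℝ) (hx1 : (∑ v, x v) = 1) (v : V) :
    row K p x v = p * x v + (1 - p) * (1 - x v - K.dG x v) := by
  classical
  set G := Finset.univ.filter (fun w => w ≠ v ∧ K.ecolor v w = EColor.gray) with hGdef
  set B := Finset.univ.filter (fun w => w ≠ v ∧ K.ecolor v w = EColor.black) with hBdef
  have hGB : Disjoint G B := by
    rw [Finset.disjoint_left]
    intro w hwG hwB
    simp [hGdef, hBdef] at hwG hwB
    rw [hwG.2] at hwB
    exact absurd hwB.2 (by simp)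
  have hunion : G ∪ B = Finset.univ.erase v := by
    ext w
    simp only [hGdef, hBdef, Finset.mem_union, Finset.mem_filter, Finset.mem_univ,
      true_and, Finset.mem_erase, and_true]
    constructor
    · rintro (⟨h, _⟩ | ⟨h, _⟩) <;> exact h
    · intro h
      have := hedges v w (Ne.symm h)
      rcases hc : K.ecolor v w with c | c | c
      · exact absurd hc this
      · exact Or.inl ⟨h, rfl⟩
      · exact Or.inr ⟨h, rfl⟩
  have hsplit : row K p x v
      = K.M p v v * x v + ((∑ w ∈ G, K.M p v w * x w) + ∑ w ∈ B, K.M p v w * x w) := by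
    rw [← Finset.sum_union hGB, hunion]
    unfold row
    rw [← Finset.add_sum_erase Finset.univ _ (Finset.mem_univ v)]
  have hMv : K.M p v v = p := by simp [CRG.M, hwhite v]
  have hGz : (∑ w ∈ G, K.M p v w * x w) = 0 := by
    refine Finset.sum_eq_zero fun w hw => ?_
    simp only [hGdef, Finset.mem_filter] at hw
    rw [M_gray K p (Ne.symm hw.2.1) hw.2.2]
    ring
  have hBz : (∑ w ∈ B, K.M p v w * x w) = (1 - p) * ∑ w ∈ B, x w := by
    rw [Finset.mul_sum]
    refine Finset.sum_congr rfl fun w hw => ?_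
    simp only [hBdef, Finset.mem_filter] at hw
    rw [M_black K p (Ne.symm hw.2.1) hw.2.2]
  have hBsum : (∑ w ∈ B, x w) = 1 - x v - K.dG x v := by
    have h1 : (∑ w ∈ G, x w) + (∑ w ∈ B, x w) = ∑ w ∈ Finset.univ.erase v, x w := by
      rw [← Finset.sum_union hGB, hunion]
    have h2 : (∑ w ∈ Finset.univ.erase v, x w) = 1 - x v := by
      rw [Finset.sum_erase_eq_sub (Finset.mem_univ v), hx1]
    have h3 : K.dG x v = ∑ w ∈ G, x w := rfl
    rw [h2] at h1
    rw [h3]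
    linarith
  rw [hsplit, hMv, hGz, hBz, hBsum]
  ring


lemma dG_le (K : CRG V) (x : V → ℝ) (hx0 : ∀ v, 0 ≤ x v) (hx1 : (∑ v, x v) = 1) (v : V) :
    K.dG x v ≤ 1 - x v := by
  have h1 : K.dG x v ≤ ∑ w ∈ Finset.univ.erase v, x w := by
    refine Finset.sum_le_sum_of_subset_of_nonneg ?_ (fun w _ _ => hx0 w)
    intro w hw
    simp only [Finset.mem_filter] at hw
    exact Finset.mem_erase.2 ⟨hw.2.1, Finset.mem_univ w⟩
  rw [Finset.sum_erase_eq_sub (Finset.mem_univ v), hx1] at h1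
  exact h1

end CRGaux

theorem two_common_gray_neighbors_or_g_large {V : Type} [Fintype V] [DecidableEq V] [Nonempty V]
    (p : ℝ) (hp : p ∈ Set.Ico (1 / 2 : ℝ) 1)
    (K : CRG V) (hcore : K.IsPCore p)
    (hwhite : ∀ v : V, K.vWhite v = true)
    (hedges : ∀ u v : V, u ≠ v → K.ecolor u v ≠ EColor.white)
    (x : V → ℝ) (hx : K.IsOptWeight p x)
    (v₀ : V) (hv₀ : ∀ v : V, x v ≤ x v₀)
    (v₁ : V) (hv₁ : v₁ ≠ v₀ ∧ K.ecolor v₀ v₁ = EColor.gray)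
    (hv₁max : ∀ v : V, v ≠ v₀ → K.ecolor v₀ v = EColor.gray → x v ≤ x v₁) :
    2 ≤ (Finset.univ.filter fun w =>
        w ≠ v₀ ∧ w ≠ v₁ ∧ K.ecolor v₀ w = EColor.gray ∧ K.ecolor v₁ w = EColor.gray).card ∨
    (1 - p) / 2 < K.g p ∨ p / 3 ≤ K.g p := by
  classical
  by_contra hcon
  push_neg at hcon
  obtain ⟨hW2, hg1, hg2⟩ := hcon
  obtain ⟨hp2, hp1⟩ := hp
  have hp0 : (0:ℝ) ≤ p := by linarith
  have hp1' : p ≤ 1 := le_of_lt hp1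
  obtain ⟨hx0, hx1, hxg⟩ := hx
  have hxopt : K.IsOptWeight p x := ⟨hx0, hx1, hxg⟩
  have hb : 0 < x v₁ := CRGaux.pos_of_core K hp0 hp1' hcore hxopt v₁
  have ha : 0 < x v₀ := lt_of_lt_of_le hb (hv₀ v₁)
  have e0 : K.g p = p * x v₀ + (1 - p) * (1 - x v₀ - K.dG x v₀) := by
    rw [← CRGaux.row_eq K hp0 hp1' hxopt v₀ ha,
      CRGaux.eigen K p hwhite hedges x hx1 v₀]
  have e1 : K.g p = p * x v₁ + (1 - p) * (1 - x v₁ - K.dG x v₁) := by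
    rw [← CRGaux.row_eq K hp0 hp1' hxopt v₁ hb,
      CRGaux.eigen K p hwhite hedges x hx1 v₁]
  have hd0 : K.dG x v₀ ≤ 1 - x v₀ := CRGaux.dG_le K x hx0 hx1 v₀
  have hd1 : K.dG x v₁ ≤ 1 - x v₁ := CRGaux.dG_le K x hx0 hx1 v₁
  -- the main combinatorial inequality: dG v₀ + dG v₁ ≤ 1 + x v₁
  set W := Finset.univ.filter (fun w => w ≠ v₀ ∧ w ≠ v₁ ∧
    K.ecolor v₀ w = EColor.gray ∧ K.ecolor v₁ w = EColor.gray) with hWdef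
  set G0 := Finset.univ.filter (fun w => w ≠ v₀ ∧ K.ecolor v₀ w = EColor.gray) with hG0
  set G1 := Finset.univ.filter (fun w => w ≠ v₁ ∧ K.ecolor v₁ w = EColor.gray) with hG1
  have hinter : G0 ∩ G1 = W := by
    ext w
    simp only [hG0, hG1, hWdef, Finset.mem_inter, Finset.mem_filter, Finset.mem_univ, true_and]
    tauto
  have hUle : (∑ w ∈ G0 ∪ G1, x w) ≤ 1 := by
    rw [← hx1]
    exact Finset.sum_le_sum_of_subset_of_nonneg (Finset.subset_univ _) (fun w _ _ => hx0 w)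
  have hWle : (∑ w ∈ W, x w) ≤ x v₁ := by
    have hcard : W.card ≤ 1 := by omega
    have hle : ∀ w ∈ W, x w ≤ x v₁ := by
      intro w hw
      simp only [hWdef, Finset.mem_filter] at hw
      exact hv₁max w hw.2.1 hw.2.2.2.1
    calc (∑ w ∈ W, x w) ≤ W.card • x v₁ := Finset.sum_le_card_nsmul W x (x v₁) hle
      _ = (W.card : ℝ) * x v₁ := by rw [nsmul_eq_mul]
      _ ≤ 1 * x v₁ := by
          apply mul_le_mul_of_nonneg_right _ (le_of_lt hb)
          exact_mod_cast hcard
      _ = x v₁ := one_mul _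
  have hsum : K.dG x v₀ + K.dG x v₁ ≤ 1 + x v₁ := by
    have h := Finset.sum_union_inter (s₁ := G0) (s₂ := G1) (f := x)
    have hdg0 : K.dG x v₀ = ∑ w ∈ G0, x w := rfl
    have hdg1 : K.dG x v₁ = ∑ w ∈ G1, x w := rfl
    rw [hinter] at h
    rw [hdg0, hdg1, ← h]
    linarith
  -- arithmetic conclusion
  set a := x v₀
  set b := x v₁
  set d0 := K.dG x v₀
  set d1 := K.dG x v₁
  have hab : b ≤ a := hv₀ v₁
  have hpa : p * a ≤ K.g p := by nlinarith [mul_nonneg (by linarith : (0:ℝ) ≤ 1 - p) (by linarith : (0:ℝ) ≤ 1 - a - d0)]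
  have hb13 : b < 1/3 := by nlinarith
  have hF : 2 * K.g p ≥ (2*p - 1) * (a + b) + (1 - p) * (1 - b) := by
    nlinarith [mul_nonneg (by linarith : (0:ℝ) ≤ 1 - p)
      (by linarith : (0:ℝ) ≤ 1 + b - d0 - d1)]
  rcases le_or_gt p (3/5) with hple | hpgt
  · nlinarith [mul_nonneg (by linarith : (0:ℝ) ≤ 2*p - 1) (by linarith : (0:ℝ) ≤ a - b),
      mul_nonneg (by linarith : (0:ℝ) ≤ 3 - 5*p) (by linarith : (0:ℝ) ≤ 1/3 - b)]
  · nlinarith [mul_pos (by linarith : (0:ℝ) < 5*p - 3) hb,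
      mul_nonneg (by linarith : (0:ℝ) ≤ 2*p - 1) (by linarith : (0:ℝ) ≤ a - b)]
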